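/- (Type C_n, values of ℓ_{ϖ_n}⁻ at fundamental weights.) Let n ≥ 2 and j ∈ {2, …, n}, and set i = ⌊(j+2)/2⌋. Then ℓ_{ϖ_n}⁻(ϖ_j) = (n − j)·i + i(i+1)/2; that is, the least k such that some composition w of k simple reflections of type C_n satisfies ⟨w ϖ_j, ϖ_n⟩ < 0 equals (n − j)·i + i(i+1)/2. -/

import Mathlib

open scoped RealInnerProductSpace

/-- The `j`-th simple reflection of type `Cₙ` (`1 ≤ j ≤ n`), acting on `ℝⁿ`:
for `j < n` it transposes the coordinates numbered `j` and `j+1` (in `1`-based numbering),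
and for `j = n` it negates the last coordinate. -/
noncomputable def sC (n j : ℕ) : EuclideanSpace ℝ (Fin n) → EuclideanSpace ℝ (Fin n) :=
  fun v => WithLp.toLp 2 (fun (i : Fin n) =>
    if j = n then (if (i : ℕ) + 1 = n then -(v i) else v i)
    else if (i : ℕ) + 1 = j then v ⟨j % n, Nat.mod_lt _ i.pos⟩
    else if (i : ℕ) = j then v ⟨(j - 1) % n, Nat.mod_lt _ i.pos⟩
    else v i)

/-- The composition of the simple reflections indexed by the entries of `l`
(the last entry of the list is applied first). -/
noncomputable def compC (n : ℕ) (l : List ℕ) :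
    EuclideanSpace ℝ (Fin n) → EuclideanSpace ℝ (Fin n) :=
  l.foldr (fun j g => sC n j ∘ g) id

/-- The fundamental weight `ϖⱼ = e₁ + ⋯ + eⱼ` of type `Cₙ` (`1 ≤ j ≤ n`). -/
noncomputable def wtC (n j : ℕ) : EuclideanSpace ℝ (Fin n) :=
  WithLp.toLp 2 (fun (i : Fin n) => if (i : ℕ) < j then 1 else 0)

namespace St12

open Finset

variable (n j : ℕ)

noncomputable def negCnt (v : EuclideanSpace ℝ (Fin n)) : ℕ :=
  ∑ p : Fin n, if v p = -1 then 1 else 0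

noncomputable def posCnt (v : EuclideanSpace ℝ (Fin n)) : ℕ :=
  ∑ p : Fin n, if v p = 1 then 1 else 0

noncomputable def hiCnt (v : EuclideanSpace ℝ (Fin n)) (d : ℕ) : ℕ :=
  ∑ p : Fin n, if v p = 1 ∧ d ≤ (p : ℕ) then 1 else 0

noncomputable def fPot (v : EuclideanSpace ℝ (Fin n)) : ℕ :=
  ∑ c ∈ Finset.range n, ((j + 2) / 2 - negCnt n v - hiCnt n v (c + 1))

def Inv (v : EuclideanSpace ℝ (Fin n)) : Prop :=
  (∀ p, v p = -1 ∨ v p = 0 ∨ v p = 1) ∧ posCnt n v + negCnt n v = j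

/-! ### generic sum lemmas -/

lemma sum_single_diff {g h : Fin n → ℕ} {q : Fin n} (he : ∀ p, p ≠ q → g p = h p) :
    (∑ p, g p) + h q = (∑ p, h p) + g q := by
  classical
  have h1 : ∑ p ∈ univ.erase q, g p + g q = ∑ p, g p :=
    Finset.sum_erase_add _ _ (mem_univ q)
  have h2 : ∑ p ∈ univ.erase q, h p + h q = ∑ p, h p :=
    Finset.sum_erase_add _ _ (mem_univ q)
  have h3 : ∑ p ∈ univ.erase q, g p = ∑ p ∈ univ.erase q, h p :=
    Finset.sum_congr rfl (fun p hp => he p (Finset.ne_of_mem_erase hp))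
  omega

lemma sum_pair_diff {g h : Fin n → ℕ} {q r : Fin n} (hqr : q ≠ r)
    (he : ∀ p, p ≠ q → p ≠ r → g p = h p) :
    (∑ p, g p) + (h q + h r) = (∑ p, h p) + (g q + g r) := by
  classical
  have hr' : r ∈ univ.erase q := Finset.mem_erase.2 ⟨hqr.symm ∘ Eq.symm ∘ Eq.symm, mem_univ r⟩
  have e1 : ∑ p ∈ (univ.erase q).erase r, g p + g r = ∑ p ∈ univ.erase q, g p :=
    Finset.sum_erase_add _ _ hr'
  have e2 : ∑ p ∈ univ.erase q, g p + g q = ∑ p, g p :=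
    Finset.sum_erase_add _ _ (mem_univ q)
  have e3 : ∑ p ∈ (univ.erase q).erase r, h p + h r = ∑ p ∈ univ.erase q, h p :=
    Finset.sum_erase_add _ _ hr'
  have e4 : ∑ p ∈ univ.erase q, h p + h q = ∑ p, h p :=
    Finset.sum_erase_add _ _ (mem_univ q)
  have e5 : ∑ p ∈ (univ.erase q).erase r, g p = ∑ p ∈ (univ.erase q).erase r, h p := by
    refine Finset.sum_congr rfl (fun p hp => ?_)
    have h1 : p ≠ r := Finset.ne_of_mem_erase hp
    have h2 : p ≠ q := Finset.ne_of_mem_erase (Finset.mem_of_mem_erase hp)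
    exact he p h2 h1
  omega

/-! ### pointwise description of the reflections -/

lemma sC_n_apply (v : EuclideanSpace ℝ (Fin n)) (p : Fin n) :
    sC n n v p = if (p : ℕ) = n - 1 then -v p else v p := by
  have hp := p.isLt
  by_cases h : (p : ℕ) = n - 1
  · have h' : (p : ℕ) + 1 = n := by omega
    have h'' : n - 1 + 1 = n := by omega
    simp [sC, h, h', h'']
  · have h' : ¬((p : ℕ) + 1 = n) := by omega
    simp [sC, h, h']

lemma sC_swap_apply (a : ℕ) (ha1 : 1 ≤ a) (han : a < n) (v : EuclideanSpace ℝ (Fin n))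
    (p : Fin n) :
    sC n a v p = if (p : ℕ) = a - 1 then v ⟨a, han⟩
      else if (p : ℕ) = a then v ⟨a - 1, by omega⟩ else v p := by
  simp only [sC, PiLp.toLp_apply]
  rw [if_neg (by omega : ¬ a = n)]
  by_cases h1 : (p : ℕ) + 1 = a
  · rw [if_pos h1, if_pos (by omega)]
    exact congrArg v.ofLp (Fin.ext (Nat.mod_eq_of_lt han))
  · rw [if_neg h1, if_neg (by omega : ¬ (p : ℕ) = a - 1)]
    by_cases h2 : (p : ℕ) = a
    · rw [if_pos h2, if_pos h2]
      exact congrArg v.ofLp (Fin.ext (Nat.mod_eq_of_lt (show a - 1 < n by omega)))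
    · rw [if_neg h2, if_neg h2]

/-! ### effect of the swap reflections (1 ≤ a < n) on the counts -/

section Swap

variable {n : ℕ} (a : ℕ)

lemma swap_q (ha1 : 1 ≤ a) (han : a < n) (v : EuclideanSpace ℝ (Fin n)) : sC n a v ⟨a - 1, by omega⟩ = v ⟨a, han⟩ := by
  rw [sC_swap_apply n a ha1 han, if_pos rfl]

lemma swap_r (ha1 : 1 ≤ a) (han : a < n) (v : EuclideanSpace ℝ (Fin n)) :
    sC n a v ⟨a, han⟩ = v ⟨a - 1, by omega⟩ := by
  rw [sC_swap_apply n a ha1 han, if_neg (by simp; omega), if_pos rfl]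

lemma swap_other (ha1 : 1 ≤ a) (han : a < n) (v : EuclideanSpace ℝ (Fin n))
    (p : Fin n) (h1 : (p : ℕ) ≠ a - 1) (h2 : (p : ℕ) ≠ a) :
    sC n a v p = v p := by
  rw [sC_swap_apply n a ha1 han, if_neg h1, if_neg h2]

lemma qr_ne (ha1 : 1 ≤ a) (han : a < n) : (⟨a - 1, by omega⟩ : Fin n) ≠ ⟨a, han⟩ := by
  simp [Fin.ext_iff]; omega

lemma negCnt_swap (ha1 : 1 ≤ a) (han : a < n) (v : EuclideanSpace ℝ (Fin n)) : negCnt n (sC n a v) = negCnt n v := by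
  have key := sum_pair_diff n (g := fun p => if sC n a v p = -1 then 1 else 0)
    (h := fun p => if v p = -1 then 1 else 0) (qr_ne a ha1 han)
    (fun p h1 h2 => by
      simp only
      rw [swap_other a ha1 han v p (by simpa [Fin.ext_iff] using h1) (by simpa [Fin.ext_iff] using h2)])
  simp only at key
  rw [swap_q a ha1 han v, swap_r a ha1 han v] at key
  unfold negCnt
  omega

lemma posCnt_swap (ha1 : 1 ≤ a) (han : a < n) (v : EuclideanSpace ℝ (Fin n)) : posCnt n (sC n a v) = posCnt n v := by
  have key := sum_pair_diff n (g := fun p => if sC n a v p = 1 then 1 else 0)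
    (h := fun p => if v p = 1 then 1 else 0) (qr_ne a ha1 han)
    (fun p h1 h2 => by
      simp only
      rw [swap_other a ha1 han v p (by simpa [Fin.ext_iff] using h1) (by simpa [Fin.ext_iff] using h2)])
  simp only at key
  rw [swap_q a ha1 han v, swap_r a ha1 han v] at key
  unfold posCnt
  omega

lemma hiCnt_swap_ne (ha1 : 1 ≤ a) (han : a < n) (v : EuclideanSpace ℝ (Fin n))
    (d : ℕ) (hd : d ≠ a) :
    hiCnt n (sC n a v) d = hiCnt n v d := by
  have key := sum_pair_diff n (g := fun p => if sC n a v p = 1 ∧ d ≤ (p : ℕ) then 1 else 0)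
    (h := fun p => if v p = 1 ∧ d ≤ (p : ℕ) then 1 else 0) (qr_ne a ha1 han)
    (fun p h1 h2 => by
      simp only
      rw [swap_other a ha1 han v p (by simpa [Fin.ext_iff] using h1) (by simpa [Fin.ext_iff] using h2)])
  beta_reduce at key
  rw [swap_q a ha1 han v, swap_r a ha1 han v] at key
  have e1 : ((d ≤ a - 1)) ↔ (d ≤ a) := by omega
  -- rewrite the four indicator values
  have c1 : (if v ⟨a, han⟩ = 1 ∧ d ≤ ((⟨a - 1, by omega⟩ : Fin n) : ℕ) then 1 else 0)
      = (if v ⟨a, han⟩ = 1 ∧ d ≤ ((⟨a, han⟩ : Fin n) : ℕ) then 1 else 0) := by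
    refine if_congr (and_congr_right fun _ => ?_) rfl rfl
    simpa using e1
  have c2 : (if v ⟨a - 1, by omega⟩ = 1 ∧ d ≤ ((⟨a, han⟩ : Fin n) : ℕ) then 1 else 0)
      = (if v ⟨a - 1, by omega⟩ = 1 ∧ d ≤ ((⟨a - 1, by omega⟩ : Fin n) : ℕ) then 1 else 0) := by
    refine if_congr (and_congr_right fun _ => ?_) rfl rfl
    simpa using e1.symm
  rw [c1, c2] at key
  unfold hiCnt
  omega

set_option maxHeartbeats 800000 in
lemma hiCnt_swap_a (ha1 : 1 ≤ a) (han : a < n) (v : EuclideanSpace ℝ (Fin n)) :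
    hiCnt n (sC n a v) a + (if v ⟨a, han⟩ = 1 then 1 else 0)
      = hiCnt n v a + (if v ⟨a - 1, by omega⟩ = 1 then 1 else 0) := by
  have key := sum_pair_diff n (g := fun p => if sC n a v p = 1 ∧ a ≤ (p : ℕ) then 1 else 0)
    (h := fun p => if v p = 1 ∧ a ≤ (p : ℕ) then 1 else 0) (qr_ne a ha1 han)
    (fun p h1 h2 => by
      simp only
      rw [swap_other a ha1 han v p (by simpa [Fin.ext_iff] using h1) (by simpa [Fin.ext_iff] using h2)])
  beta_reduce at key
  rw [swap_q a ha1 han v, swap_r a ha1 han v] at key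
  have hq0 : ¬ (a ≤ a - 1) := by omega
  have c1 : (if v ⟨a, han⟩ = 1 ∧ a ≤ ((⟨a - 1, by omega⟩ : Fin n) : ℕ) then 1 else 0) = 0 := by
    rw [if_neg]; simp; omega
  have c2 : (if v ⟨a - 1, by omega⟩ = 1 ∧ a ≤ ((⟨a - 1, by omega⟩ : Fin n) : ℕ) then 1 else 0) = 0 := by
    rw [if_neg]; simp; omega
  have c3 : (if v ⟨a - 1, by omega⟩ = 1 ∧ a ≤ ((⟨a, han⟩ : Fin n) : ℕ) then 1 else 0)
      = (if v ⟨a - 1, by omega⟩ = 1 then 1 else 0) := by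
    refine if_congr ?_ rfl rfl
    simp
  have c4 : (if v ⟨a, han⟩ = 1 ∧ a ≤ ((⟨a, han⟩ : Fin n) : ℕ) then 1 else 0)
      = (if v ⟨a, han⟩ = 1 then 1 else 0) := by
    refine if_congr ?_ rfl rfl
    simp
  rw [c1, c2, c3, c4] at key
  unfold hiCnt
  omega

end Swap

/-! ### effect of the last reflection on the counts -/

section Last

lemma sC_n_at_q {n : ℕ} (hn : 2 ≤ n) (v : EuclideanSpace ℝ (Fin n)) : sC n n v ⟨n - 1, by omega⟩ = -(v ⟨n - 1, by omega⟩) := by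
  rw [sC_n_apply, if_pos rfl]

lemma sC_n_other {n : ℕ} (hn : 2 ≤ n) (v : EuclideanSpace ℝ (Fin n)) (p : Fin n) (hp : (p : ℕ) ≠ n - 1) : sC n n v p = v p := by
  rw [sC_n_apply, if_neg hp]

lemma sC_n_fix {n : ℕ} (hn : 2 ≤ n) (v : EuclideanSpace ℝ (Fin n)) (h0 : v ⟨n - 1, by omega⟩ = 0) : sC n n v = v := by
  ext p
  by_cases hp : (p : ℕ) = n - 1
  · have : p = (⟨n - 1, by omega⟩ : Fin n) := Fin.ext hp
    rw [this, sC_n_at_q hn, h0, neg_zero]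
  · exact sC_n_other hn v p hp

lemma negCnt_last_pos {n : ℕ} (hn : 2 ≤ n) (v : EuclideanSpace ℝ (Fin n)) (h1 : v ⟨n - 1, by omega⟩ = 1) :
    negCnt n (sC n n v) = negCnt n v + 1 := by
  have key := sum_single_diff n (g := fun p => if sC n n v p = -1 then 1 else 0)
    (h := fun p => if v p = -1 then 1 else 0) (q := ⟨n - 1, by omega⟩)
    (fun p hp => by
      simp only
      rw [sC_n_other hn v p (by simpa [Fin.ext_iff] using hp)])
  beta_reduce at key
  rw [sC_n_at_q hn, h1] at key
  rw [if_neg (by norm_num), if_pos (by norm_num)] at key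
  unfold negCnt
  omega

lemma posCnt_last_pos {n : ℕ} (hn : 2 ≤ n) (v : EuclideanSpace ℝ (Fin n)) (h1 : v ⟨n - 1, by omega⟩ = 1) :
    posCnt n (sC n n v) + 1 = posCnt n v := by
  have key := sum_single_diff n (g := fun p => if sC n n v p = 1 then 1 else 0)
    (h := fun p => if v p = 1 then 1 else 0) (q := ⟨n - 1, by omega⟩)
    (fun p hp => by
      simp only
      rw [sC_n_other hn v p (by simpa [Fin.ext_iff] using hp)])
  beta_reduce at key
  rw [sC_n_at_q hn, h1] at key
  rw [if_pos rfl, if_neg (by norm_num)] at key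
  unfold posCnt
  omega

lemma hiCnt_last_pos {n : ℕ} (hn : 2 ≤ n) (v : EuclideanSpace ℝ (Fin n)) (h1 : v ⟨n - 1, by omega⟩ = 1) (d : ℕ) :
    hiCnt n (sC n n v) d + (if d ≤ n - 1 then 1 else 0) = hiCnt n v d := by
  have key := sum_single_diff n (g := fun p => if sC n n v p = 1 ∧ d ≤ (p : ℕ) then 1 else 0)
    (h := fun p => if v p = 1 ∧ d ≤ (p : ℕ) then 1 else 0) (q := ⟨n - 1, by omega⟩)
    (fun p hp => by
      simp only
      rw [sC_n_other hn v p (by simpa [Fin.ext_iff] using hp)])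
  beta_reduce at key
  rw [sC_n_at_q hn, h1] at key
  simp only [Fin.val_mk, neg_neg, true_and] at key
  rw [if_neg (show ¬((-1:ℝ) = 1 ∧ d ≤ n - 1) by norm_num)] at key
  unfold hiCnt
  omega

lemma negCnt_last_neg {n : ℕ} (hn : 2 ≤ n) (v : EuclideanSpace ℝ (Fin n)) (h1 : v ⟨n - 1, by omega⟩ = -1) :
    negCnt n (sC n n v) + 1 = negCnt n v := by
  have key := sum_single_diff n (g := fun p => if sC n n v p = -1 then 1 else 0)
    (h := fun p => if v p = -1 then 1 else 0) (q := ⟨n - 1, by omega⟩)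
    (fun p hp => by
      simp only
      rw [sC_n_other hn v p (by simpa [Fin.ext_iff] using hp)])
  beta_reduce at key
  rw [sC_n_at_q hn, h1] at key
  rw [if_pos rfl, if_neg (by norm_num)] at key
  unfold negCnt
  omega

lemma posCnt_last_neg {n : ℕ} (hn : 2 ≤ n) (v : EuclideanSpace ℝ (Fin n)) (h1 : v ⟨n - 1, by omega⟩ = -1) :
    posCnt n (sC n n v) = posCnt n v + 1 := by
  have key := sum_single_diff n (g := fun p => if sC n n v p = 1 then 1 else 0)
    (h := fun p => if v p = 1 then 1 else 0) (q := ⟨n - 1, by omega⟩)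
    (fun p hp => by
      simp only
      rw [sC_n_other hn v p (by simpa [Fin.ext_iff] using hp)])
  beta_reduce at key
  rw [sC_n_at_q hn, h1] at key
  rw [if_neg (by norm_num), if_pos (by norm_num)] at key
  unfold posCnt
  omega

lemma hiCnt_last_neg {n : ℕ} (hn : 2 ≤ n) (v : EuclideanSpace ℝ (Fin n)) (h1 : v ⟨n - 1, by omega⟩ = -1) (d : ℕ) :
    hiCnt n (sC n n v) d = hiCnt n v d + (if d ≤ n - 1 then 1 else 0) := by
  have key := sum_single_diff n (g := fun p => if sC n n v p = 1 ∧ d ≤ (p : ℕ) then 1 else 0)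
    (h := fun p => if v p = 1 ∧ d ≤ (p : ℕ) then 1 else 0) (q := ⟨n - 1, by omega⟩)
    (fun p hp => by
      simp only
      rw [sC_n_other hn v p (by simpa [Fin.ext_iff] using hp)])
  beta_reduce at key
  rw [sC_n_at_q hn, h1] at key
  simp only [Fin.val_mk, neg_neg, true_and] at key
  rw [if_neg (show ¬((-1:ℝ) = 1 ∧ d ≤ n - 1) by norm_num)] at key
  unfold hiCnt
  omega

end Last

/-! ### trivial count facts -/

lemma hiCnt_top {n : ℕ} (v : EuclideanSpace ℝ (Fin n)) : hiCnt n v n = 0 := by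
  apply Finset.sum_eq_zero
  intro p _
  rw [if_neg]
  rintro ⟨-, h2⟩
  exact absurd p.isLt (by omega)

/-! ### invariant preservation -/

lemma Inv_sC {n j : ℕ} (hn : 2 ≤ n) (a : ℕ) (ha1 : 1 ≤ a) (han : a ≤ n)
    {v : EuclideanSpace ℝ (Fin n)} (hI : Inv n j v) : Inv n j (sC n a v) := by
  rcases eq_or_lt_of_le han with rfl | hlt
  · constructor
    · intro p
      rw [sC_n_apply]
      split_ifs with h
      · rcases hI.1 p with h' | h' | h' <;> rw [h'] <;> norm_num
      · exact hI.1 p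
    · rcases hI.1 ⟨a - 1, by omega⟩ with h' | h' | h'
      · have e1 := negCnt_last_neg hn v h'
        have e2 := posCnt_last_neg hn v h'
        have := hI.2
        omega
      · rw [sC_n_fix hn v h']
        exact hI.2
      · have e1 := negCnt_last_pos hn v h'
        have e2 := posCnt_last_pos hn v h'
        have := hI.2
        omega
  · constructor
    · intro p
      rw [sC_swap_apply n a ha1 hlt]
      split_ifs
      · exact hI.1 _
      · exact hI.1 _
      · exact hI.1 p
    · rw [negCnt_swap a ha1 hlt, posCnt_swap a ha1 hlt]
      exact hI.2


lemma ind_le_one (P : Prop) [Decidable P] : (if P then (1:ℕ) else 0) ≤ 1 := by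
  split_ifs <;> omega

/-! ### fPot lemmas -/

lemma fPot_sum_bound {n j : ℕ} (v w : EuclideanSpace ℝ (Fin n)) (c₀ : ℕ) (hc₀ : c₀ < n)
    (hpt : ∀ c ∈ Finset.range n,
      (j + 2) / 2 - negCnt n v - hiCnt n v (c + 1)
        ≤ ((j + 2) / 2 - negCnt n w - hiCnt n w (c + 1)) + (if c = c₀ then 1 else 0)) :
    fPot n j v ≤ fPot n j w + 1 := by
  unfold fPot
  calc ∑ c ∈ Finset.range n, ((j + 2) / 2 - negCnt n v - hiCnt n v (c + 1))
      ≤ ∑ c ∈ Finset.range n,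
          (((j + 2) / 2 - negCnt n w - hiCnt n w (c + 1)) + (if c = c₀ then 1 else 0)) :=
        Finset.sum_le_sum hpt
    _ = (∑ c ∈ Finset.range n, ((j + 2) / 2 - negCnt n w - hiCnt n w (c + 1)))
          + ∑ c ∈ Finset.range n, (if c = c₀ then 1 else 0) := Finset.sum_add_distrib
    _ = _ := by
        rw [Finset.sum_ite_eq' (Finset.range n) c₀ (fun _ => 1),
          if_pos (Finset.mem_range.2 hc₀)]

lemma fPot_sum_exact {n j : ℕ} (v w : EuclideanSpace ℝ (Fin n)) (c₀ : ℕ) (hc₀ : c₀ < n)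
    (hpt : ∀ c ∈ Finset.range n,
      (j + 2) / 2 - negCnt n v - hiCnt n v (c + 1)
        = ((j + 2) / 2 - negCnt n w - hiCnt n w (c + 1)) + (if c = c₀ then 1 else 0)) :
    fPot n j v = fPot n j w + 1 := by
  unfold fPot
  calc ∑ c ∈ Finset.range n, ((j + 2) / 2 - negCnt n v - hiCnt n v (c + 1))
      = ∑ c ∈ Finset.range n,
          (((j + 2) / 2 - negCnt n w - hiCnt n w (c + 1)) + (if c = c₀ then 1 else 0)) :=
        Finset.sum_congr rfl hpt
    _ = (∑ c ∈ Finset.range n, ((j + 2) / 2 - negCnt n w - hiCnt n w (c + 1)))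
          + ∑ c ∈ Finset.range n, (if c = c₀ then 1 else 0) := Finset.sum_add_distrib
    _ = _ := by
        rw [Finset.sum_ite_eq' (Finset.range n) c₀ (fun _ => 1),
          if_pos (Finset.mem_range.2 hc₀)]

/-- the Lipschitz property of the potential. -/
lemma fPot_lip {n j : ℕ} (hn : 2 ≤ n) (a : ℕ) (ha1 : 1 ≤ a) (han : a ≤ n)
    (v : EuclideanSpace ℝ (Fin n)) (hI : Inv n j v) :
    fPot n j v ≤ fPot n j (sC n a v) + 1 := by
  rcases eq_or_lt_of_le han with rfl | hlt
  · -- last reflection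
    rcases hI.1 ⟨a - 1, by omega⟩ with hv | hv | hv
    · -- entry -1
      have e1 := negCnt_last_neg hn v hv
      apply fPot_sum_bound v (sC a a v) (a - 1) (by omega)
      intro c hc
      have e2 := hiCnt_last_neg hn v hv (c + 1)
      rw [e2]
      split_ifs <;> omega
    · -- entry 0
      rw [sC_n_fix hn v hv]
      omega
    · -- entry 1
      have e1 := negCnt_last_pos hn v hv
      apply fPot_sum_bound v (sC a a v) (a - 1) (by omega)
      intro c hc
      have e2 := hiCnt_last_pos hn v hv (c + 1)
      have hc' := Finset.mem_range.mp hc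
      split_ifs at e2 ⊢ <;> omega
  · -- swap reflection
    apply fPot_sum_bound v (sC n a v) (a - 1) (by omega)
    intro c hc
    by_cases hca : c + 1 = a
    · have h1 := hiCnt_swap_a a ha1 hlt v
      have hb1 := ind_le_one (v ⟨a, hlt⟩ = 1)
      have hb2 := ind_le_one (v ⟨a - 1, show a - 1 < n by omega⟩ = 1)
      have e := negCnt_swap a ha1 hlt v
      rw [if_pos (by omega : c = a - 1)]
      rw [hca, e]
      omega
    · rw [hiCnt_swap_ne a ha1 hlt v (c + 1) hca, negCnt_swap a ha1 hlt v]
      omega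

/-- exact step when negating a `+1` in the last slot -/
lemma fPot_last {n j : ℕ} (hn : 2 ≤ n) (v : EuclideanSpace ℝ (Fin n))
    (h1 : v ⟨n - 1, by omega⟩ = 1) (hm : negCnt n v + 1 ≤ (j + 2) / 2) :
    fPot n j v = fPot n j (sC n n v) + 1 := by
  have e1 := negCnt_last_pos hn v h1
  apply fPot_sum_exact v (sC n n v) (n - 1) (by omega)
  intro c hc
  have e2 := hiCnt_last_pos hn v h1 (c + 1)
  have e3 := hiCnt_top v
  have hc' := Finset.mem_range.mp hc
  by_cases hcn : c = n - 1
  · rw [if_pos hcn]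
    have e4 : c + 1 = n := by omega
    rw [e4, e3, hiCnt_top (sC n n v)]
    omega
  · rw [if_neg hcn]
    rw [if_pos (by omega : c + 1 ≤ n - 1)] at e2
    omega

/-- exact step when moving the topmost `+1` one slot to the right -/
lemma fPot_move {n j : ℕ} (a : ℕ) (ha1 : 1 ≤ a) (han : a < n)
    (v : EuclideanSpace ℝ (Fin n))
    (hq : v ⟨a - 1, by omega⟩ = 1) (htop : hiCnt n v a = 0)
    (hm : negCnt n v + 1 ≤ (j + 2) / 2) :
    fPot n j v = fPot n j (sC n a v) + 1 := by
  have e1 := negCnt_swap a ha1 han v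
  have key := hiCnt_swap_a a ha1 han v
  rw [if_pos hq, htop] at key
  -- v ⟨a, _⟩ ≠ 1 : from htop
  have hr : (if v ⟨a, han⟩ = 1 then (1:ℕ) else 0) = 0 := by
    rcases Nat.eq_zero_or_pos (if v ⟨a, han⟩ = 1 then (1:ℕ) else 0) with h | h
    · exact h
    · exfalso
      have hv1 : v ⟨a, han⟩ = 1 := by
        by_contra hne
        rw [if_neg hne] at h
        omega
      have : (if v ⟨a, han⟩ = 1 ∧ a ≤ ((⟨a, han⟩ : Fin n) : ℕ) then (1:ℕ) else 0) = 0 := by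
        refine Finset.sum_eq_zero_iff.mp htop ⟨a, han⟩ (Finset.mem_univ _) 
      rw [if_pos ⟨hv1, by simp⟩] at this
      omega
  rw [hr] at key
  simp only [add_zero, zero_add] at key
  apply fPot_sum_exact v (sC n a v) (a - 1) (by omega)
  intro c hc
  by_cases hca : c + 1 = a
  · rw [if_pos (by omega : c = a - 1), hca, htop, key, e1]
    omega
  · rw [if_neg (by omega : ¬ c = a - 1), hiCnt_swap_ne a ha1 han v (c + 1) hca, e1]
    omega

/-! ### compC lemmas -/

lemma compC_nil {n : ℕ} (v : EuclideanSpace ℝ (Fin n)) : compC n [] v = v := rfl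

lemma compC_concat {n : ℕ} (l : List ℕ) (a : ℕ) (v : EuclideanSpace ℝ (Fin n)) :
    compC n (l ++ [a]) v = compC n l (sC n a v) := by
  induction l with
  | nil => rfl
  | cons b l ih =>
      show sC n b (compC n (l ++ [a]) v) = sC n b (compC n l (sC n a v))
      rw [ih]

/-! ### sums vs counts -/

lemma sum_eq_cnt {n j : ℕ} (v : EuclideanSpace ℝ (Fin n)) (hI : Inv n j v) :
    ∑ p, v p = (posCnt n v : ℝ) - (negCnt n v : ℝ) := by
  unfold posCnt negCnt
  push_cast
  rw [← Finset.sum_sub_distrib]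
  apply Finset.sum_congr rfl
  intro p _
  rcases hI.1 p with h | h | h <;> rw [h] <;> norm_num

lemma inner_wt {n : ℕ} (v : EuclideanSpace ℝ (Fin n)) : ⟪v, wtC n n⟫ = ∑ p, v p := by
  rw [PiLp.inner_apply]
  apply Finset.sum_congr rfl
  intro p _
  simp [wtC, p.isLt, RCLike.inner_apply]

/-! ### the lower bound -/

lemma base_neg_sum {n j : ℕ} (v : EuclideanSpace ℝ (Fin n)) (hI : Inv n j v)
    (hneg : ∑ p, v p < 0) : fPot n j v = 0 := by
  have hs := sum_eq_cnt v hI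
  rw [hs] at hneg
  have hPN : posCnt n v < negCnt n v := by
    have h' : (posCnt n v : ℝ) < negCnt n v := by linarith
    exact_mod_cast h'
  have hPNj := hI.2
  apply Finset.sum_eq_zero
  intro c _
  omega

lemma fPot_le_length {n j : ℕ} (hn : 2 ≤ n) (l : List ℕ) :
    ∀ v : EuclideanSpace ℝ (Fin n), (∀ m ∈ l, 1 ≤ m ∧ m ≤ n) → Inv n j v →
      (∑ p, compC n l v p < 0) → fPot n j v ≤ l.length := by
  induction l using List.reverseRecOn with
  | nil =>
      intro v _ hI hneg
      rw [compC_nil] at hneg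
      rw [base_neg_sum v hI hneg]
      simp
  | append_singleton l a ih =>
      intro v hval hI hneg
      have hval' : ∀ m ∈ l, 1 ≤ m ∧ m ≤ n := fun m hm => hval m (by simp [hm])
      have hA : 1 ≤ a ∧ a ≤ n := hval a (by simp)
      rw [compC_concat] at hneg
      have h1 := ih (sC n a v) hval' (Inv_sC hn a hA.1 hA.2 hI) hneg
      have h2 := fPot_lip hn a hA.1 hA.2 v hI
      simp only [List.length_append, List.length_singleton]
      omega

/-! ### existence of an optimal word -/

lemma exists_word {n j : ℕ} (hn : 2 ≤ n) (hj2 : 2 ≤ j) (hjn : j ≤ n) :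
    ∀ (k : ℕ) (v : EuclideanSpace ℝ (Fin n)), Inv n j v → fPot n j v = k →
      ∃ l : List ℕ, (∀ m ∈ l, 1 ≤ m ∧ m ≤ n) ∧ l.length = k ∧ ∑ p, compC n l v p < 0 := by
  intro k
  induction k with
  | zero =>
      intro v hI hf
      refine ⟨[], by simp, by simp, ?_⟩
      rw [compC_nil]
      -- from fPot = 0 deduce negCnt ≥ (j+2)/2
      have hterm := Finset.sum_eq_zero_iff.mp hf (n - 1) (Finset.mem_range.2 (by omega))
      have e4 : (n - 1) + 1 = n := by omega
      rw [e4, hiCnt_top v] at hterm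
      have hPN := hI.2
      rw [sum_eq_cnt v hI]
      have : posCnt n v < negCnt n v := by omega
      have := Nat.cast_lt (α := ℝ) |>.mpr this
      linarith
  | succ k ih =>
      intro v hI hf
      have hm : negCnt n v + 1 ≤ (j + 2) / 2 := by
        by_contra hcon
        have : fPot n j v = 0 := Finset.sum_eq_zero (fun c _ => by omega)
        omega
      have hP : 1 ≤ posCnt n v := by
        have := hI.2
        omega
      have hex : ∃ p : Fin n, v p = 1 := by
        by_contra hcon
        push_neg at hcon
        have : posCnt n v = 0 := Finset.sum_eq_zero (fun p _ => if_neg (hcon p))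
        omega
      obtain ⟨p1, hp1⟩ := hex
      set s := Finset.univ.filter (fun p : Fin n => v p = 1) with hs
      have hsne : s.Nonempty := ⟨p1, Finset.mem_filter.2 ⟨Finset.mem_univ _, hp1⟩⟩
      set p₀ := s.max' hsne with hp₀def
      have hp₀ : v p₀ = 1 := (Finset.mem_filter.mp (s.max'_mem hsne)).2
      have htopmost : ∀ p : Fin n, v p = 1 → p ≤ p₀ :=
        fun p hp => s.le_max' p (Finset.mem_filter.2 ⟨Finset.mem_univ _, hp⟩)
      by_cases hcase : (p₀ : ℕ) = n - 1
      · -- apply the last reflection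
        have hq : v ⟨n - 1, by omega⟩ = 1 := by
          rw [show (⟨n - 1, by omega⟩ : Fin n) = p₀ from Fin.ext hcase.symm]
          exact hp₀
        have hstep := fPot_last (j := j) hn v hq hm
        obtain ⟨l, hl1, hl2, hl3⟩ := ih (sC n n v) (Inv_sC hn n (by omega) le_rfl hI)
          (by omega)
        refine ⟨l ++ [n], ?_, by simp [hl2], ?_⟩
        · intro m hm'
          rcases List.mem_append.mp hm' with h | h
          · exact hl1 m h
          · rw [List.mem_singleton.mp h]; omega
        · rw [compC_concat]; exact hl3
      · -- apply a swap
        set a := (p₀ : ℕ) + 1 with ha_def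
        have ha1 : 1 ≤ a := by omega
        have han : a < n := by
          have := p₀.isLt
          omega
        have hq : v ⟨a - 1, by omega⟩ = 1 := by
          rw [show (⟨a - 1, by omega⟩ : Fin n) = p₀ from Fin.ext (by simp only [Fin.val_mk]; omega)]
          exact hp₀
        have htop : hiCnt n v a = 0 := by
          apply Finset.sum_eq_zero
          intro p _
          rw [if_neg]
          rintro ⟨h1', h2'⟩
          have := htopmost p h1'
          rw [Fin.le_def] at this
          omega
        have hstep := fPot_move (j := j) a ha1 han v hq htop hm
        obtain ⟨l, hl1, hl2, hl3⟩ := ih (sC n a v) (Inv_sC hn a ha1 (le_of_lt han) hI)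
          (by omega)
        refine ⟨l ++ [a], ?_, by simp [hl2], ?_⟩
        · intro m hm'
          rcases List.mem_append.mp hm' with h | h
          · exact hl1 m h
          · rw [List.mem_singleton.mp h]; omega
        · rw [compC_concat]; exact hl3

/-! ### values at the fundamental weight -/

lemma ind_sum_range (j : ℕ) : ∀ N : ℕ,
    (∑ c ∈ Finset.range N, if c < j then (1:ℕ) else 0) = min j N := by
  intro N
  induction N with
  | zero => simp
  | succ N ih =>
      rw [Finset.sum_range_succ, ih]
      by_cases h : N < j
      · rw [if_pos h]; omega
      · rw [if_neg h]; omega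

lemma ind_sum_range2 (j d : ℕ) : ∀ N : ℕ,
    (∑ c ∈ Finset.range N, if c < j ∧ d ≤ c then (1:ℕ) else 0) = min j N - d := by
  intro N
  induction N with
  | zero => simp
  | succ N ih =>
      rw [Finset.sum_range_succ, ih]
      by_cases h : N < j ∧ d ≤ N
      · rw [if_pos h]; omega
      · rw [if_neg h]; omega

lemma negCnt_wt (n j : ℕ) : negCnt n (wtC n j) = 0 := by
  apply Finset.sum_eq_zero
  intro p _
  rw [if_neg]
  unfold wtC
  simp only [PiLp.toLp_apply]
  split_ifs <;> norm_num

lemma posCnt_wt (n j : ℕ) (hjn : j ≤ n) : posCnt n (wtC n j) = j := by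
  unfold posCnt
  have e : ∀ p : Fin n, (if wtC n j p = 1 then (1:ℕ) else 0) = if (p : ℕ) < j then 1 else 0 := by
    intro p
    unfold wtC
    simp only [PiLp.toLp_apply]
    split_ifs with h1 h2 h2 <;> first | rfl | (exfalso; revert h1; simp_all) | (exfalso; norm_num at *)
  rw [Finset.sum_congr rfl (fun p _ => e p)]
  rw [Fin.sum_univ_eq_sum_range (fun c => if c < j then (1:ℕ) else 0) n, ind_sum_range]
  omega

lemma hiCnt_wt (n j : ℕ) (hjn : j ≤ n) (d : ℕ) : hiCnt n (wtC n j) d = j - d := by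
  unfold hiCnt
  have e : ∀ p : Fin n, (if wtC n j p = 1 ∧ d ≤ (p : ℕ) then (1:ℕ) else 0)
      = if (p : ℕ) < j ∧ d ≤ (p : ℕ) then 1 else 0 := by
    intro p
    unfold wtC
    show (if (if (p : ℕ) < j then (1:ℝ) else 0) = 1 ∧ d ≤ (p : ℕ) then (1:ℕ) else 0) = _
    by_cases h1 : (p : ℕ) < j
    · rw [if_pos h1]
      by_cases h2 : d ≤ (p : ℕ)
      · rw [if_pos ⟨rfl, h2⟩, if_pos ⟨h1, h2⟩]
      · rw [if_neg (fun hc => h2 hc.2), if_neg (fun hc => h2 hc.2)]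
    · rw [if_neg h1, if_neg (by rintro ⟨hc, -⟩; norm_num at hc), if_neg (fun hc => h1 hc.1)]
  rw [Finset.sum_congr rfl (fun p _ => e p)]
  rw [Fin.sum_univ_eq_sum_range (fun c => if c < j ∧ d ≤ c then (1:ℕ) else 0) n, ind_sum_range2]
  omega

lemma Inv_wt (n j : ℕ) (hjn : j ≤ n) : Inv n j (wtC n j) := by
  constructor
  · intro p
    unfold wtC
    simp only [PiLp.toLp_apply]
    split_ifs <;> norm_num
  · rw [posCnt_wt n j hjn, negCnt_wt n j]
    omega

/-! ### the arithmetic identity -/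

lemma gauss_sub (i : ℕ) : ∑ c ∈ Finset.range (i + 1), (i - c) = i * (i + 1) / 2 := by
  have h := Finset.sum_range_reflect (fun c => i - c) (i + 1)
  have e : ∀ c ∈ Finset.range (i + 1), i - (i + 1 - 1 - c) = c := by
    intro c hc
    have := Finset.mem_range.mp hc
    omega
  rw [Finset.sum_congr rfl e] at h
  rw [← h, Finset.sum_range_id, Nat.add_sub_cancel, Nat.mul_comm]

lemma sum_isub (i j : ℕ) (hij : i ≤ j) :
    ∑ c ∈ Finset.range j, (i - c) = i * (i + 1) / 2 := by
  rcases le_total j (i + 1) with h | h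
  · rw [← gauss_sub i]
    apply Finset.sum_subset (Finset.range_subset_range.2 h)
    intro c hc hnc
    have h1 := Finset.mem_range.mp hc
    have h2 : ¬ c < j := fun hcon => hnc (Finset.mem_range.2 hcon)
    omega
  · rw [← gauss_sub i]
    symm
    apply Finset.sum_subset (Finset.range_subset_range.2 h)
    intro c hc hnc
    have h2 : ¬ c < i + 1 := fun hcon => hnc (Finset.mem_range.2 hcon)
    omega

lemma arith_sum (j : ℕ) (hj2 : 2 ≤ j) : ∀ n : ℕ, j ≤ n →
    (∑ c ∈ Finset.range n, ((j + 2) / 2 - (j - (c + 1))))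
      = (n - j) * ((j + 2) / 2) + ((j + 2) / 2) * ((j + 2) / 2 + 1) / 2 := by
  set i := (j + 2) / 2 with hi
  have hij : i ≤ j := by omega
  intro n hn
  induction n, hn using Nat.le_induction with
  | base =>
      have e : ∀ c ∈ Finset.range j, i - (j - (c + 1)) = i - (j - 1 - c) := by
        intro c hc; omega
      rw [Finset.sum_congr rfl e]
      rw [Finset.sum_range_reflect (fun c => i - c) j]
      rw [sum_isub i j hij, Nat.sub_self, Nat.zero_mul, Nat.zero_add]
  | succ n hn ih =>
      rw [Finset.sum_range_succ, ih]
      have e : j - (n + 1) = 0 := by omega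
      rw [e]
      rw [show n + 1 - j = (n - j) + 1 from by omega, add_mul, one_mul]
      omega

lemma fPot_wt (n j : ℕ) (hn : 2 ≤ n) (hj2 : 2 ≤ j) (hjn : j ≤ n) :
    fPot n j (wtC n j)
      = (n - j) * ((j + 2) / 2) + ((j + 2) / 2) * ((j + 2) / 2 + 1) / 2 := by
  unfold fPot
  have e : ∀ c ∈ Finset.range n,
      (j + 2) / 2 - negCnt n (wtC n j) - hiCnt n (wtC n j) (c + 1)
        = (j + 2) / 2 - (j - (c + 1)) := by
    intro c _
    rw [negCnt_wt n j, hiCnt_wt n j hjn (c + 1)]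
    omega
  rw [Finset.sum_congr rfl e]
  exact arith_sum j hj2 n hjn

end St12

theorem statement12 (n j : ℕ) (hn : 2 ≤ n) (hj2 : 2 ≤ j) (hjn : j ≤ n) :
    IsLeast {k : ℕ | ∃ l : List ℕ, (∀ m ∈ l, 1 ≤ m ∧ m ≤ n) ∧ l.length = k ∧
        ⟪compC n l (wtC n j), wtC n n⟫ < 0}
      ((n - j) * ((j + 2) / 2) + ((j + 2) / 2) * ((j + 2) / 2 + 1) / 2) := by
  constructor
  · obtain ⟨l, h1, h2, h3⟩ := St12.exists_word hn hj2 hjn (St12.fPot n j (wtC n j))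
      (wtC n j) (St12.Inv_wt n j hjn) rfl
    refine ⟨l, h1, ?_, ?_⟩
    · rw [h2, St12.fPot_wt n j hn hj2 hjn]
    · rw [St12.inner_wt]
      exact h3
  · rintro k ⟨l, hval, hlen, hneg⟩
    rw [St12.inner_wt] at hneg
    have := St12.fPot_le_length hn l (wtC n j) hval (St12.Inv_wt n j hjn) hneg
    rw [St12.fPot_wt n j hn hj2 hjn] at this
    omega
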